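/- For every regular expression e, L(e) = L(nf_ε(e)), where nf_ε(e) is the look-ahead normal form of e. -/

import Mathlib

namespace PointedRE

inductive PItem (α : Type) : Type
  | empty : PItem α
  | eps : PItem α
  | ch : α → PItem α
  | pch : α → PItem α
  | plus : PItem α → PItem α → PItem α
  | cat : PItem α → PItem α → PItem α
  | star : PItem α → PItem α

namespace PItem

variable {α : Type}

/-- The carrier: erase all points. -/
def carrier : PItem α → RegularExpression α
  | empty => 0
  | eps => 1
  | ch a => RegularExpression.char a
  | pch a => RegularExpression.char a
  | plus e1 e2 => carrier e1 + carrier e2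
  | cat e1 e2 => carrier e1 * carrier e2
  | star e => (carrier e).star

/-- ε(b) : {ε} if b, ∅ otherwise. -/
def ebool (b : Bool) : Language α := if b then 1 else 0

/-- The pointed language of a pointed item. -/
def Lp : PItem α → Language α
  | empty => 0
  | eps => 0
  | ch _ => 0
  | pch a => {[a]}
  | plus e1 e2 => Lp e1 + Lp e2
  | cat e1 e2 => Lp e1 * (carrier e2).matches' + Lp e2
  | star e => Lp e * KStar.kstar (carrier e).matches'

/-- A pointed regular expression (pre): a pointed item with a trailing boolean. -/
abbrev Pre (α : Type) := PItem α × Bool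

/-- The pointed language of a pre. -/
def LpP (p : Pre α) : Language α := Lp p.1 + ebool p.2

/-- Broadcasting a point inside a pointed item. -/
def broadcast : PItem α → Pre α
  | empty => (empty, false)
  | eps => (eps, true)
  | ch a => (pch a, false)
  | pch a => (pch a, false)
  | plus e1 e2 =>
      (plus (broadcast e1).1 (broadcast e2).1, (broadcast e1).2 || (broadcast e2).2)
  | cat e1 e2 =>
      if (broadcast e1).2 then
        (cat (broadcast e1).1 (broadcast e2).1, (broadcast e2).2)
      else (cat (broadcast e1).1 e2, false)
  | star e => (star (broadcast e).1, true)

/-- Lifted sum on pres. -/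
def oplus (p1 p2 : Pre α) : Pre α := (plus p1.1 p2.1, p1.2 || p2.2)

/-- Lifted concatenation on pres. -/
def odot (p1 p2 : Pre α) : Pre α :=
  if p1.2 then (cat p1.1 (broadcast p2.1).1, p2.2 || (broadcast p2.1).2)
  else (cat p1.1 p2.1, p2.2)

/-- Lifted Kleene star on pres. -/
def ostar (p : Pre α) : Pre α :=
  if p.2 then (star (broadcast p.1).1, true) else (star p.1, false)

/-- Broadcasting extended to pres. -/
def broadcastP (p : Pre α) : Pre α :=
  ((broadcast p.1).1, p.2 || (broadcast p.1).2)

/-- The move operation on pointed items. -/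
def move [DecidableEq α] (a : α) : PItem α → Pre α
  | empty => (empty, false)
  | eps => (eps, false)
  | ch b => (ch b, false)
  | pch b => if b = a then (ch b, true) else (ch b, false)
  | plus e1 e2 => oplus (move a e1) (move a e2)
  | cat e1 e2 => odot (move a e1) (move a e2)
  | star e => ostar (move a e)

/-- The move operation iterated along a string (on pres, ignoring the trailing point). -/
def moves [DecidableEq α] : Pre α → List α → Pre α
  | p, [] => p
  | p, a :: w => moves (move a p.1) w

/-- Embedding of regular expressions as point-free pointed items. -/
def embed : RegularExpression α → PItem α
  | .zero => empty
  | .epsilon => eps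
  | .char a => ch a
  | .plus e1 e2 => plus (embed e1) (embed e2)
  | .comp e1 e2 => cat (embed e1) (embed e2)
  | .star e => star (embed e)

/-- Read-back of a pointed item as a set of regular expressions. -/
def R : PItem α → Set (RegularExpression α)
  | empty => ∅
  | eps => ∅
  | ch _ => ∅
  | pch a => {RegularExpression.char a}
  | plus e1 e2 => R e1 ∪ R e2
  | cat e1 e2 => (fun r => r * carrier e2) '' R e1 ∪ R e2
  | star e => (fun r => r * (carrier e).star) '' R e

/-- Read-back of a pre. -/
def RP (p : Pre α) : Set (RegularExpression α) :=
  R p.1 ∪ (if p.2 then {1} else ∅)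

/-- The language of a set of regular expressions. -/
def LS (S : Set (RegularExpression α)) : Language α :=
  {w | ∃ r ∈ S, w ∈ r.matches'}

/-- The look-ahead normal form of a regular expression (without ε). -/
def nf : RegularExpression α → Set (RegularExpression α)
  | .zero => ∅
  | .epsilon => ∅
  | .char a => {RegularExpression.char a}
  | .plus e1 e2 => nf e1 ∪ nf e2
  | .comp e1 e2 =>
      if e1.matchEpsilon then (fun r => r * e2) '' nf e1 ∪ nf e2
      else (fun r => r * e2) '' nf e1
  | .star e => (fun r => r * e.star) '' nf e

/-- The look-ahead normal form with ε added when the expression is nullable. -/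
def nfe (e : RegularExpression α) : Set (RegularExpression α) :=
  nf e ∪ (if e.matchEpsilon then {1} else ∅)

/-- nf_ε lifted to sets of regular expressions. -/
def nfeS (S : Set (RegularExpression α)) : Set (RegularExpression α) :=
  ⋃ r ∈ S, nfe r

/-- Merge of two pointed items (meaningful when they share the same carrier). -/
def merge : PItem α → PItem α → PItem α
  | ch a, pch _ => pch a
  | plus e1 e2, plus f1 f2 => plus (merge e1 f1) (merge e2 f2)
  | cat e1 e2, cat f1 f2 => cat (merge e1 f1) (merge e2 f2)
  | star e, star f => star (merge e f)
  | e, _ => e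

/-- Merge extended to pres. -/
def mergeP (p q : Pre α) : Pre α := (merge p.1 q.1, p.2 || q.2)

end PItem
end PointedRE

open PointedRE PItem


section Aux
variable {α : Type}

lemma LS_union (S T : Set (RegularExpression α)) : LS (S ∪ T) = LS S + LS T := by
  ext w
  simp only [LS, Set.mem_setOf_eq, Set.mem_union, Language.mem_add]
  constructor
  · rintro ⟨r, h | h, hw⟩
    · exact Or.inl ⟨r, h, hw⟩
    · exact Or.inr ⟨r, h, hw⟩
  · rintro (⟨r, h, hw⟩ | ⟨r, h, hw⟩)
    · exact ⟨r, Or.inl h, hw⟩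
    · exact ⟨r, Or.inr h, hw⟩

lemma LS_image_mul (S : Set (RegularExpression α)) (e : RegularExpression α) :
    LS ((fun r => r * e) '' S) = LS S * e.matches' := by
  ext w
  simp only [LS, Set.mem_setOf_eq, Set.mem_image, Language.mem_mul,
    RegularExpression.matches'_mul]
  constructor
  · rintro ⟨r, ⟨s, hs, rfl⟩, hw⟩
    rw [RegularExpression.matches'_mul] at hw
    rcases hw with ⟨a, ha, b, hb, rfl⟩
    exact ⟨a, ⟨s, hs, ha⟩, b, hb, rfl⟩
  · rintro ⟨a, ⟨s, hs, ha⟩, b, hb, rfl⟩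
    refine ⟨s * e, ⟨s, hs, rfl⟩, ?_⟩
    rw [RegularExpression.matches'_mul]
    exact ⟨a, ha, b, hb, rfl⟩

lemma matchEpsilon_iff (r : RegularExpression α) :
    r.matchEpsilon = true ↔ [] ∈ r.matches' := by
  induction r with
  | zero => simp [RegularExpression.matchEpsilon, RegularExpression.matches'_zero]
  | epsilon => simp [RegularExpression.matchEpsilon, RegularExpression.matches'_epsilon]
  | char a =>
      show false = true ↔ [] ∈ ({[a]} : Language α)
      constructor
      · intro h; cases h
      · intro h; cases h
  | plus P Q ihP ihQ =>
      show (P.matchEpsilon || Q.matchEpsilon) = true ↔ [] ∈ (P.plus Q).matches'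
      rw [show (P.plus Q).matches' = P.matches' + Q.matches' from rfl]
      simp only [Bool.or_eq_true, ihP, ihQ, Language.mem_add]
  | comp P Q ihP ihQ =>
      show (P.matchEpsilon && Q.matchEpsilon) = true ↔ [] ∈ (P.comp Q).matches'
      rw [show (P.comp Q).matches' = P.matches' * Q.matches' from rfl]
      simp only [Bool.and_eq_true, ihP, ihQ, Language.mem_mul]
      constructor
      · rintro ⟨h1, h2⟩; exact ⟨[], h1, [], h2, rfl⟩
      · rintro ⟨a, ha, b, hb, h⟩
        rcases List.append_eq_nil_iff.mp h with ⟨rfl, rfl⟩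
        exact ⟨ha, hb⟩
  | star P ih =>
      show true = true ↔ [] ∈ KStar.kstar P.matches'
      exact ⟨fun _ => Language.nil_mem_kstar _, fun _ => rfl⟩

lemma LS_nf (r : RegularExpression α) :
    LS (nf r) = {w ∈ r.matches' | w ≠ []} := by
  induction r with
  | zero =>
      ext w
      simp [nf, LS, RegularExpression.matches'_zero]
  | epsilon =>
      ext w
      simp only [nf, LS, Set.mem_setOf_eq, Set.mem_empty_iff_false,
        RegularExpression.matches'_epsilon, Language.mem_one]
      constructor
      · rintro ⟨r, h, -⟩; exact h.elim
      · rintro ⟨rfl, h⟩; exact absurd rfl h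
  | char a =>
      ext w
      simp only [nf, LS, Set.mem_setOf_eq, Set.mem_singleton_iff,
        RegularExpression.matches'_char]
      constructor
      · rintro ⟨r, rfl, hw⟩
        rw [RegularExpression.matches'_char] at hw
        exact ⟨hw, by rw [hw]; simp⟩
      · rintro ⟨hw, -⟩
        exact ⟨RegularExpression.char a, rfl, by rwa [RegularExpression.matches'_char]⟩
  | plus P Q ihP ihQ =>
      rw [show nf (P.plus Q) = nf P ∪ nf Q from rfl, LS_union, ihP, ihQ]
      ext w
      rw [show (P.plus Q).matches' = P.matches' + Q.matches' from rfl]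
      simp only [Language.mem_add, Set.mem_setOf_eq]
      constructor
      · rintro (⟨h, hn⟩ | ⟨h, hn⟩)
        · exact ⟨Or.inl h, hn⟩
        · exact ⟨Or.inr h, hn⟩
      · rintro ⟨h | h, hn⟩
        · exact Or.inl ⟨h, hn⟩
        · exact Or.inr ⟨h, hn⟩
  | comp P Q ihP ihQ =>
      rw [show nf (P.comp Q) = (if P.matchEpsilon then (fun r => r * Q) '' nf P ∪ nf Q
        else (fun r => r * Q) '' nf P) from rfl]
      have hm : (P.comp Q).matches' = P.matches' * Q.matches' := rfl
      by_cases hP : P.matchEpsilon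
      · rw [if_pos hP, LS_union, LS_image_mul, ihP, ihQ]
        have hPnil : [] ∈ P.matches' := (matchEpsilon_iff P).mp hP
        ext w
        simp only [Language.mem_add, Language.mem_mul, Set.mem_setOf_eq, hm]
        constructor
        · rintro (⟨a, ⟨ha, hane⟩, b, hb, rfl⟩ | ⟨hw, hne⟩)
          · exact ⟨⟨a, ha, b, hb, rfl⟩, by simp [hane]⟩
          · exact ⟨⟨[], hPnil, w, hw, rfl⟩, hne⟩
        · rintro ⟨⟨a, ha, b, hb, rfl⟩, hne⟩
          rcases eq_or_ne a [] with rfl | hane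
          · exact Or.inr ⟨hb, by simpa using hne⟩
          · exact Or.inl ⟨a, ⟨ha, hane⟩, b, hb, rfl⟩
      · rw [if_neg hP, LS_image_mul, ihP]
        have hPnil : [] ∉ P.matches' := fun h => hP ((matchEpsilon_iff P).mpr h)
        ext w
        simp only [Language.mem_mul, Set.mem_setOf_eq, hm]
        constructor
        · rintro ⟨a, ⟨ha, hane⟩, b, hb, rfl⟩
          exact ⟨⟨a, ha, b, hb, rfl⟩, by simp [hane]⟩
        · rintro ⟨⟨a, ha, b, hb, rfl⟩, hne⟩
          exact ⟨a, ⟨ha, fun h => hPnil (h ▸ ha)⟩, b, hb, rfl⟩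
  | star P ih =>
      rw [show nf P.star = (fun r => r * P.star) '' nf P from rfl, LS_image_mul, ih]
      have hm : P.star.matches' = KStar.kstar P.matches' := rfl
      rw [hm]
      ext w
      constructor
      · rintro ⟨a, ⟨ha, hane⟩, b, hb, rfl⟩
        rcases Language.mem_kstar.mp hb with ⟨L, rfl, hL⟩
        refine ⟨Language.mem_kstar.mpr ⟨a :: L, by simp, ?_⟩, by simp [hane]⟩
        intro y hy
        rcases List.mem_cons.mp hy with rfl | hy
        · exact ha
        · exact hL y hy
      · rintro ⟨hw, hne⟩
        rcases Language.mem_kstar_iff_exists_nonempty.mp hw with ⟨L, rfl, hL⟩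
        cases L with
        | nil => simp at hne
        | cons x L =>
            refine ⟨x, ⟨(hL x (by simp)).1, (hL x (by simp)).2⟩, L.flatten,
              Language.join_mem_kstar (fun y hy => (hL y (by simp [hy])).1), by simp⟩
end Aux

/-- L(e) = L(nf_ε(e)). -/
theorem stmt14 {α : Type} (r : RegularExpression α) :
    r.matches' = LS (nfe r) := by
  rw [nfe, LS_union, LS_nf]
  ext w
  by_cases h : r.matchEpsilon
  · have hnil := (matchEpsilon_iff r).mp h
    simp only [if_pos h, Language.mem_add, Set.mem_setOf_eq, LS, Set.mem_singleton_iff]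
    constructor
    · intro hw
      rcases eq_or_ne w [] with rfl | hne
      · exact Or.inr ⟨1, rfl, by simp [RegularExpression.matches']⟩
      · exact Or.inl ⟨hw, hne⟩
    · rintro (⟨hw, _⟩ | ⟨e, rfl, he⟩)
      · exact hw
      · simpa [RegularExpression.matches'] using (Language.mem_one w).mp he ▸ hnil
  · have hnil : [] ∉ r.matches' := fun hh => h ((matchEpsilon_iff r).mpr hh)
    simp only [if_neg h, Language.mem_add, Set.mem_setOf_eq, LS]
    constructor
    · intro hw
      exact Or.inl ⟨hw, fun hh => hnil (hh ▸ hw)⟩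
    · rintro (⟨hw, _⟩ | ⟨e, he, _⟩)
      · exact hw
      · cases he
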